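/- Let q be a prime power, n ≥ 2 an integer with n | q - 1, F a finite field with q elements, a ∈ F such that X^n - a is irreducible over F, K = F[X]/(X^n - a), α ∈ K the image of X, b ∈ F nonzero, h = a^((q-1)/n), and g = α + b. Let e < q^n be a natural number with 100·S_q(e) < 132·n, with base-q digits e_0, ..., e_{n-1}, and let f ∈ F[X] be a polynomial of degree less than n with f(α) = g^e in K. Then there exists a polynomial t ∈ F[X] with 100·deg(t) < 32·n such that f + (X^n - a)·t = ∏_{i=0}^{n-1} (h^i X + b)^{e_i} in F[X]. -/

import Mathlib

open Polynomial

private lemma aux_ofDigits (b : ℕ) : ∀ (L : List ℕ) (n : ℕ), L.length ≤ n →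
    Nat.ofDigits b L = ∑ i ∈ Finset.range n, L.getD i 0 * b ^ i
  | [], n, _ => by simp
  | a :: L, n, hL => by
    obtain ⟨m, rfl⟩ : ∃ m, n = m + 1 := ⟨n - 1, by simp at hL; omega⟩
    have hIH := aux_ofDigits b L m (by simpa using hL)
    rw [Finset.sum_range_succ']
    simp only [List.getD_cons_succ, List.getD_cons_zero, pow_zero, mul_one]
    rw [Nat.ofDigits_cons, hIH, Finset.mul_sum, Nat.add_comm]
    exact congrArg (· + a) (Finset.sum_congr rfl fun x _ => by ring)

private lemma aux_sum_getD : ∀ (L : List ℕ) (n : ℕ), L.length ≤ n →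
    ∑ i ∈ Finset.range n, L.getD i 0 = L.sum
  | [], n, _ => by simp
  | a :: L, n, hL => by
    obtain ⟨m, rfl⟩ : ∃ m, n = m + 1 := ⟨n - 1, by simp at hL; omega⟩
    have hIH := aux_sum_getD L m (by simpa using hL)
    rw [Finset.sum_range_succ']
    simp only [List.getD_cons_succ, List.getD_cons_zero]
    rw [hIH, List.sum_cons, Nat.add_comm]

/-- If `f` of degree `< n` represents `g^e` in `K = F[X]/(X^n - a)` with
`S_q(e) < 1.32 n`, then there is `t` with `deg t < 0.32 n` such that
`f + (X^n - a) t = ∏ i < n, (h^i X + b)^(e_i)` in `F[X]`. -/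
theorem exists_t_of_sum_digits_lt
    (q n : ℕ) (hq : IsPrimePow q) (hn : 2 ≤ n) (hdvd : n ∣ q - 1)
    (F : Type*) [Field F] [Fintype F] (hF : Fintype.card F = q)
    (a : F) (hirr : Irreducible (X ^ n - C a : F[X]))
    (b : F) (hb : b ≠ 0) (h : F) (hh : h = a ^ ((q - 1) / n))
    (e : ℕ) (he : e < q ^ n) (hs : 100 * (Nat.digits q e).sum < 132 * n)
    (f : F[X]) (hdeg : f.degree < n)
    (hf : Polynomial.aeval (AdjoinRoot.root (X ^ n - C a : F[X])) f =
      (AdjoinRoot.root (X ^ n - C a : F[X]) + AdjoinRoot.of (X ^ n - C a : F[X]) b) ^ e) :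
    ∃ t : F[X], 100 * t.natDegree < 32 * n ∧
      f + (X ^ n - C a) * t =
        ∏ i ∈ Finset.range n, (C (h ^ i) * X + C b) ^ ((Nat.digits q e).getD i 0) := by
  classical
  have hq2 : 2 ≤ q := hq.two_le
  have ha : a ≠ 0 := by
    rintro rfl
    rw [map_zero, sub_zero] at hirr
    exact not_irreducible_pow (by omega) hirr
  have hh0 : h ≠ 0 := by rw [hh]; exact pow_ne_zero _ ha
  haveI : Fact (Irreducible (X ^ n - C a : F[X])) := ⟨hirr⟩
  set α := AdjoinRoot.root (X ^ n - C a : F[X]) with hα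
  set φ := AdjoinRoot.of (X ^ n - C a : F[X]) with hφ
  set d : ℕ → ℕ := fun i => (Nat.digits q e).getD i 0 with hd
  set P : F[X] := ∏ i ∈ Finset.range n, (C (h ^ i) * X + C b) ^ d i with hP
  -- characteristic
  set p := ringChar F with hpdef
  haveI : CharP F p := ringChar.charP F
  have hp : p.Prime := CharP.char_is_prime F p
  haveI : Fact p.Prime := ⟨hp⟩
  obtain ⟨s, -, hcard⟩ := FiniteField.card F p
  have hqps : q = p ^ (s : ℕ) := by rw [← hF, hcard]
  haveI : CharP (AdjoinRoot (X ^ n - C a : F[X])) p :=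
    charP_of_injective_algebraMap
      (algebraMap F (AdjoinRoot (X ^ n - C a : F[X]))).injective p
  have hfrob : ∀ x y : AdjoinRoot (X ^ n - C a : F[X]), (x + y) ^ q = x ^ q + y ^ q := by
    intro x y
    rw [hqps]
    exact add_pow_char_pow ..
  have hFq : ∀ x : F, x ^ q = x := by
    intro x
    rw [← hF]
    exact FiniteField.pow_card x
  -- α ^ n = φ a
  have hαn : α ^ n = φ a := by
    have h0 : aeval α (X ^ n - C a : F[X]) = 0 := by
      rw [hα, AdjoinRoot.aeval_eq, AdjoinRoot.mk_self]
    rw [map_sub, map_pow, aeval_X, aeval_C, sub_eq_zero] at h0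
    rw [h0, hφ, AdjoinRoot.algebraMap_eq]
  -- α ^ q = φ h * α
  set m := (q - 1) / n with hm
  have hnm : n * m = q - 1 := Nat.mul_div_cancel' hdvd
  have hq1 : q = n * m + 1 := by omega
  have hαq : α ^ q = φ h * α := by
    rw [hq1, pow_succ, pow_mul, hαn, ← map_pow, ← hh]
  -- key Frobenius iterate
  have key : ∀ i : ℕ, (α + φ b) ^ q ^ i = φ (h ^ i) * α + φ b := by
    intro i
    induction i with
    | zero => simp
    | succ i ih =>
      calc (α + φ b) ^ q ^ (i + 1) = ((α + φ b) ^ q ^ i) ^ q := by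
            rw [pow_succ, pow_mul]
        _ = (φ (h ^ i) * α + φ b) ^ q := by rw [ih]
        _ = (φ (h ^ i)) ^ q * α ^ q + (φ b) ^ q := by rw [hfrob, mul_pow]
        _ = φ (h ^ (i + 1)) * α + φ b := by
            rw [← map_pow, ← map_pow, hFq, hFq, hαq, pow_succ, map_mul]
            ring
  -- digits
  have hlen : (Nat.digits q e).length ≤ n := by
    rcases Nat.eq_zero_or_pos e with rfl | he0
    · simp
    · rw [Nat.digits_len q e (by omega) (by omega)]
      have := (Nat.log_lt_iff_lt_pow (by omega : 1 < q) (by omega : e ≠ 0)).mpr he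
      omega
  have hesum : e = ∑ i ∈ Finset.range n, d i * q ^ i := by
    conv_lhs => rw [← Nat.ofDigits_digits q e]
    exact aux_ofDigits q _ n hlen
  have hsum_digits : ∑ i ∈ Finset.range n, d i = (Nat.digits q e).sum :=
    aux_sum_getD _ n hlen
  -- P evaluated at α is g^e
  have hPK : aeval α P = (α + φ b) ^ e := by
    rw [hP, map_prod]
    calc ∏ i ∈ Finset.range n, aeval α ((C (h ^ i) * X + C b) ^ d i)
        = ∏ i ∈ Finset.range n, (φ (h ^ i) * α + φ b) ^ d i := by
          refine Finset.prod_congr rfl fun i _ => ?_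
          rw [map_pow, map_add, map_mul, aeval_C, aeval_C, aeval_X, hφ,
            AdjoinRoot.algebraMap_eq]
      _ = ∏ i ∈ Finset.range n, ((α + φ b) ^ q ^ i) ^ d i := by
          refine Finset.prod_congr rfl fun i _ => ?_
          rw [key]
      _ = ∏ i ∈ Finset.range n, (α + φ b) ^ (d i * q ^ i) := by
          refine Finset.prod_congr rfl fun i _ => ?_
          rw [← pow_mul, mul_comm]
      _ = (α + φ b) ^ ∑ i ∈ Finset.range n, d i * q ^ i :=
          Finset.prod_pow_eq_pow_sum _ _ _
      _ = (α + φ b) ^ e := by rw [← hesum]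
  -- divisibility
  have hdvd2 : (X ^ n - C a : F[X]) ∣ P - f := by
    rw [← AdjoinRoot.mk_eq_zero, map_sub, ← AdjoinRoot.aeval_eq, ← AdjoinRoot.aeval_eq,
      ← hα, hPK, hf, sub_self]
  obtain ⟨t, ht⟩ := hdvd2
  -- degree bounds
  have hdegP : P.natDegree ≤ (Nat.digits q e).sum := by
    calc P.natDegree ≤ ∑ i ∈ Finset.range n, ((C (h ^ i) * X + C b) ^ d i).natDegree :=
          natDegree_prod_le _ _
      _ ≤ ∑ i ∈ Finset.range n, d i := by
          refine Finset.sum_le_sum fun i _ => ?_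
          rw [natDegree_pow]
          calc d i * (C (h ^ i) * X + C b).natDegree ≤ d i * 1 :=
                Nat.mul_le_mul_left _ natDegree_linear_le
            _ = d i := mul_one _
      _ = _ := hsum_digits
  have hdegf : f.natDegree ≤ n - 1 := by
    rcases eq_or_ne f 0 with rfl | hf0
    · simp
    · have := (natDegree_lt_iff_degree_lt hf0).mpr hdeg
      omega
  refine ⟨t, ?_, by linear_combination -ht⟩
  rcases eq_or_ne t 0 with rfl | ht0
  · simp; omega
  · have hmul : ((X ^ n - C a : F[X]) * t).natDegree = n + t.natDegree := by
      rw [(monic_X_pow_sub_C a (show n ≠ 0 by omega)).natDegree_mul' ht0,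
        natDegree_X_pow_sub_C]
    have h1 : (P - f).natDegree ≤ max P.natDegree f.natDegree := natDegree_sub_le _ _
    rw [ht, hmul] at h1
    rcases le_max_iff.mp h1 with h2 | h2 <;> omega
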